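/- Let A → B be a flat ring homomorphism with B ⊗_A B ≅ B via multiplication. Then the induced map Spec B → Spec A is a topological embedding: it is injective and the Zariski topology on Spec B is the subspace topology induced from Spec A. -/

import Mathlib

open TensorProduct IsLocalization

set_option maxHeartbeats 1000000

/-- The key lemma: if `A → B` is flat with bijective multiplication `B ⊗[A] B → B`, then for
every ideal `J` of `B` and prime `q` of `B`, if the contraction of `J` is contained in the
contraction of `q`, then `J ≤ q`. -/
theorem crux_flat_epi {A B : Type*} [CommRing A] [CommRing B] [Algebra A B]
    (hflat : Module.Flat A B)
    (hmul : Function.Bijective (LinearMap.mul' A B))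
    (J : Ideal B) (q : Ideal B) [hqp : q.IsPrime]
    (hle : J.comap (algebraMap A B) ≤ q.comap (algebraMap A B)) : J ≤ q := by
  classical
  set f := algebraMap A B with hf
  set p : Ideal A := q.comap f with hp
  haveI : p.IsPrime := Ideal.IsPrime.comap f
  set M : Submonoid A := p.primeCompl with hM
  set T : Submonoid B := Algebra.algebraMapSubmonoid B M with hT
  let A' := Localization M
  let B' := Localization T
  have hMT : M ≤ T.comap f := M.le_comap_map
  let g : A' →+* B' := IsLocalization.map B' f hMT
  letI : Algebra A' B' := g.toAlgebra
  haveI : IsScalarTower A A' B' := by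
    refine IsScalarTower.of_algebraMap_eq' ?_
    rw [show algebraMap A' B' = g from rfl]
    rw [IsLocalization.map_comp]
    rw [← IsScalarTower.algebraMap_eq]
  -- flatness of B' over A'
  haveI : Module.Flat A B := hflat
  haveI hfl : Module.Flat A' B' :=
    Module.Flat.of_isLocalizedModule (Rp := A') M
      ((IsScalarTower.toAlgHom A B B').toLinearMap)
  -- every element of B ⊗[A] B is 1 ⊗ (its product)
  have hone : ∀ x : B ⊗[A] B, (1 : B) ⊗ₜ[A] (LinearMap.mul' A B x) = x := by
    intro x
    apply hmul.1
    simp [LinearMap.mul'_apply]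
  -- the map `ψ : B ⊗[A] B → B' ⊗[A'] B'`
  let j : B →ₗ[A] B' := (IsScalarTower.toAlgHom A B B').toLinearMap
  let ψ : B ⊗[A] B →ₗ[A] (B' ⊗[A'] B') :=
    TensorProduct.lift (LinearMap.mk₂ A (fun b c => j b ⊗ₜ[A'] j c)
      (fun b b' c => by simp [TensorProduct.add_tmul])
      (fun a b c => by
        rw [map_smul, TensorProduct.smul_tmul'])
      (fun b c c' => by simp [TensorProduct.tmul_add])
      (fun a b c => by
        rw [map_smul, TensorProduct.tmul_smul]))
  have hψ : ∀ b c : B, ψ (b ⊗ₜ[A] c) = j b ⊗ₜ[A'] j c := fun b c => rfl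
  -- surjectivity of `b' ↦ 1 ⊗ b'`
  have hδ : ∀ z : B' ⊗[A'] B', ∃ c : B', (1 : B') ⊗ₜ[A'] c = z := by
    intro z
    induction z with
    | zero => exact ⟨0, TensorProduct.tmul_zero _ _⟩
    | add x y hx hy =>
      obtain ⟨cx, rfl⟩ := hx
      obtain ⟨cy, rfl⟩ := hy
      exact ⟨cx + cy, TensorProduct.tmul_add _ _ _⟩
    | tmul x y =>
      obtain ⟨⟨b₁, t₁⟩, rfl⟩ := IsLocalization.mk'_surjective T x
      obtain ⟨⟨b₂, t₂⟩, rfl⟩ := IsLocalization.mk'_surjective T y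
      obtain ⟨s₁, hs₁, hfs₁⟩ := t₁.2
      obtain ⟨s₂, hs₂, hfs₂⟩ := t₂.2
      have key : ∀ (b : B) (t : T) (s : A) (hs : s ∈ M), f s = (t : B) →
          IsLocalization.mk' B' b t = (IsLocalization.mk' A' (1 : A) ⟨s, hs⟩) • (j b) := by
        intro b t s hs hfs
        have : (IsLocalization.mk' A' (1 : A) ⟨s, hs⟩) • (j b)
            = g (IsLocalization.mk' A' (1 : A) ⟨s, hs⟩) * (algebraMap B B' b) := rfl
        rw [this, IsLocalization.map_mk' (g := f) (hy := hMT),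
          ← IsLocalization.mk'_one (M := T) B' b, ← IsLocalization.mk'_mul]
        congr 1
        · simp
        · ext
          simp only [Submonoid.coe_mul, OneMemClass.coe_one, mul_one]
          exact hfs.symm
      dsimp only
      rw [key b₁ t₁ s₁ hs₁ hfs₁, key b₂ t₂ s₂ hs₂ hfs₂]
      have hjj : j b₁ ⊗ₜ[A'] j b₂ = (1 : B') ⊗ₜ[A'] j (b₁ * b₂) := by
        have h1 : (b₁ ⊗ₜ[A] b₂ : B ⊗[A] B) = (1 : B) ⊗ₜ[A] (b₁ * b₂) := by
          conv_lhs => rw [← hone (b₁ ⊗ₜ[A] b₂)]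
          rw [LinearMap.mul'_apply]
        have := congrArg ψ h1
        rw [hψ, hψ] at this
        rwa [show j (1 : B) = (1 : B') from map_one (IsScalarTower.toAlgHom A B B')] at this
      conv_rhs => rw [← TensorProduct.smul_tmul', TensorProduct.tmul_smul, hjj,
        ← TensorProduct.tmul_smul, ← TensorProduct.tmul_smul]
      exact ⟨_, rfl⟩
  -- disjointness of T and q
  have hdisj : Disjoint (T : Set B) (q : Set B) := by
    rw [Set.disjoint_left]
    rintro b ⟨s, hs, rfl⟩ hbq
    exact hs hbq
  -- faithful flatness of B' over A'
  haveI hff : Module.FaithfullyFlat A' B' := by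
    rw [Module.FaithfullyFlat.iff_flat_and_ideal_smul_eq_top]
    refine ⟨hfl, fun I hI => ?_⟩
    by_contra hItop
    have hIm : I ≤ IsLocalRing.maximalIdeal A' := IsLocalRing.le_maximalIdeal hItop
    have h1 : (1 : B') ∈ (I • (⊤ : Submodule A' B') : Submodule A' B') := by
      rw [hI]; exact Submodule.mem_top
    have h2 : (I • (⊤ : Submodule A' B') : Submodule A' B') ≤
        ((IsLocalRing.maximalIdeal A') • (⊤ : Submodule A' B')) :=
      Submodule.smul_mono hIm le_rfl
    have h3 : (1 : B') ∈ Ideal.map (algebraMap A' B') (IsLocalRing.maximalIdeal A') := by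
      have := h2 h1
      rwa [Ideal.smul_top_eq_map] at this
    have h4 : Ideal.map (algebraMap A' B') (IsLocalRing.maximalIdeal A') ≤
        Ideal.map (algebraMap B B') q := by
      rw [Ideal.map_le_iff_le_comap]
      intro x hx
      obtain ⟨⟨a, s⟩, rfl⟩ := IsLocalization.mk'_surjective M x
      have ha : a ∈ p := (IsLocalization.AtPrime.mk'_mem_maximal_iff A' p a s).mp hx
      rw [Ideal.mem_comap, show algebraMap A' B' = g from rfl,
        IsLocalization.map_mk' (g := f) (hy := hMT),
        IsLocalization.mk'_eq_mul_mk'_one]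
      exact Ideal.mul_mem_right _ _ (Ideal.mem_map_of_mem _ ha)
    haveI hqB' : (Ideal.map (algebraMap B B') q).IsPrime :=
      IsLocalization.isPrime_of_isPrime_disjoint T B' q hqp hdisj
    exact hqB'.ne_top (Ideal.eq_top_iff_one _ |>.mpr (h4 h3))
  -- surjectivity of g
  have hsurj : Function.Surjective g := by
    let Q := B' ⧸ LinearMap.range (Algebra.linearMap A' B')
    have hQ : Subsingleton (Q ⊗[A'] B') := by
      constructor
      intro w w'
      have hz : ∀ w : Q ⊗[A'] B', w = 0 := by
        intro w
        obtain ⟨z, rfl⟩ := LinearMap.rTensor_surjective B'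
          (g := (LinearMap.range (Algebra.linearMap A' B')).mkQ)
          (Submodule.mkQ_surjective _) w
        obtain ⟨c, rfl⟩ := hδ z
        rw [LinearMap.rTensor_tmul]
        have : (LinearMap.range (Algebra.linearMap A' B')).mkQ 1 = 0 := by
          rw [Submodule.mkQ_apply, Submodule.Quotient.mk_eq_zero]
          exact ⟨1, by simp⟩
        rw [this, TensorProduct.zero_tmul]
      rw [hz w, hz w']
    haveI := hQ
    have hQs : Subsingleton Q := Module.FaithfullyFlat.rTensor_reflects_triviality A' B' Q
    have : LinearMap.range (Algebra.linearMap A' B') = ⊤ :=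
      Submodule.Quotient.subsingleton_iff.mp hQs
    intro b
    obtain ⟨a, ha⟩ := LinearMap.range_eq_top.mp this b
    exact ⟨a, ha⟩
  -- conclude
  intro x hxJ
  obtain ⟨y, hy⟩ := hsurj (algebraMap B B' x)
  obtain ⟨⟨a, s⟩, rfl⟩ := IsLocalization.mk'_surjective M y
  rw [IsLocalization.map_mk' (g := f) (hy := hMT)] at hy
  rw [IsLocalization.mk'_eq_iff_eq_mul] at hy
  have hy' : algebraMap B B' (f a) = algebraMap B B' (x * f s) := by
    rw [hy, ← map_mul]
  obtain ⟨c, hc⟩ := (IsLocalization.eq_iff_exists T B').mp hy'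
  obtain ⟨u, hu, hfu⟩ := c.2
  have hc' : f (u * a) = x * f (u * s) := by
    have : (c : B) * f a = (c : B) * (x * f s) := hc
    rw [← hfu] at this
    rw [map_mul, map_mul]
    rw [this]; ring
  -- u * a ∈ J.comap f, hence in p
  have hua : u * a ∈ p := by
    apply hle
    rw [Ideal.mem_comap, hc']
    exact J.mul_mem_right _ hxJ
  have ha : a ∈ p := by
    rcases (Ideal.IsPrime.comap f (hK := hqp)).mem_or_mem hua with h | h
    · exact absurd h hu
    · exact h
  -- now x * f (u * s) = f (u * a) = f u * f a ∈ q, and f (u * s) ∉ q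
  have h1 : x * f (u * s) ∈ q := by
    rw [← hc', map_mul]
    exact q.mul_mem_left _ ha
  have h2 : f (u * s) ∉ q := by
    rw [map_mul]
    intro h
    rcases hqp.mem_or_mem h with h | h
    · exact hu h
    · exact s.2 h
  rcases hqp.mem_or_mem h1 with h | h
  · exact h
  · exact absurd h h2

/-- If `A → B` is flat with `B ⊗[A] B ≅ B` via multiplication, then
`Spec B → Spec A` is a topological embedding (injective, with the subspace topology). -/
theorem primeSpectrum_comap_isEmbedding {A B : Type*} [CommRing A] [CommRing B] [Algebra A B]
    (hflat : Module.Flat A B)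
    (hmul : Function.Bijective (LinearMap.mul' A B)) :
    Topology.IsEmbedding (PrimeSpectrum.comap (algebraMap A B)) := by
  have crux : ∀ (J : Ideal B) (q : PrimeSpectrum B),
      J.comap (algebraMap A B) ≤ (PrimeSpectrum.comap (algebraMap A B) q).asIdeal →
      J ≤ q.asIdeal := by
    intro J q h
    exact crux_flat_epi hflat hmul J q.asIdeal h
  constructor
  · -- inducing
    refine ⟨TopologicalSpace.ext_isClosed fun Z ↦ ?_⟩
    simp_rw [isClosed_induced_iff, PrimeSpectrum.isClosed_iff_zeroLocus,
      @eq_comm _ _ (PrimeSpectrum.zeroLocus _), exists_exists_eq_and,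
      PrimeSpectrum.preimage_comap_zeroLocus]
    constructor
    · rintro ⟨s, rfl⟩
      refine ⟨((Ideal.span s).comap (algebraMap A B) : Ideal A), ?_⟩
      ext q
      simp only [PrimeSpectrum.mem_zeroLocus, Set.image_subset_iff]
      constructor
      · intro h
        refine Set.Subset.trans Ideal.subset_span ?_
        exact crux (Ideal.span s) q (fun x hx => h hx)
      · intro h x hx
        show algebraMap A B x ∈ q.asIdeal
        exact Ideal.span_le.mpr h hx
    · rintro ⟨s, rfl⟩
      exact ⟨algebraMap A B '' s, rfl⟩
  · -- injective
    intro q₁ q₂ h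
    have h' : (PrimeSpectrum.comap (algebraMap A B) q₁).asIdeal =
        (PrimeSpectrum.comap (algebraMap A B) q₂).asIdeal := by rw [h]
    have h12 := crux q₁.asIdeal q₂ (le_of_eq h')
    have h21 := crux q₂.asIdeal q₁ (le_of_eq h'.symm)
    exact PrimeSpectrum.ext (le_antisymm h12 h21)
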